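/- arXiv:2205.01787 — 6 statements merged into one kernel-verified Lean document; each statement's English description precedes it below -/
import Mathlib

section
/- Let D be an ultrafilter over a set I and let f : I → I. Then there is a set X ∈ D such that either f(i) = i for all i ∈ X, or f(i) ∉ X for all i ∈ X. -/
/-- A filter over a set `I` (here, a type `I`): a collection of subsets of `I` containing
`I` itself, closed under finite (binary) intersections, and upward closed. -/
def IsFilterOn {I : Type*} (D : Set (Set I)) : Prop :=
  Set.univ ∈ D ∧ (∀ X ∈ D, ∀ Y ∈ D, X ∩ Y ∈ D) ∧ ∀ X ∈ D, ∀ Z : Set I, X ⊆ Z → Z ∈ D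

/-- A filter `D` over `I` is an ultrafilter if for every `X ⊆ I`,
`X ∈ D` iff the complement `I ∖ X ∉ D`. -/
def IsUltrafilterOn {I : Type*} (D : Set (Set I)) : Prop :=
  IsFilterOn D ∧ ∀ X : Set I, X ∈ D ↔ Xᶜ ∉ D

open Finset in
/-- Finite 3-coloring lemma for functional graphs: on any finite set `S`, there is a
3-coloring such that `f i` gets a different color from `i` whenever both are in `S`
and `f i ≠ i`. -/
lemma fin3_coloring {I : Type*} (f : I → I) (S : Finset I) :
    ∃ c : I → Fin 3, ∀ i ∈ S, f i ∈ S → f i ≠ i → c (f i) ≠ c i := by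
  classical
  induction S using Finset.strongInduction with
  | _ S ih =>
    rcases S.eq_empty_or_nonempty with rfl | hS
    · exact ⟨fun _ => 0, by simp⟩
    -- find a vertex with at most one preimage in S
    have hv : ∃ v ∈ S, (S.filter (fun j => f j = v)).card ≤ 1 := by
      by_contra h
      push_neg at h
      have h2 : ∀ v ∈ S, 2 ≤ (S.filter (fun j => f j = v)).card := h
      set T := S.filter (fun i => f i ∈ S) with hT
      have hcard : T.card = ∑ v ∈ S, (T.filter (fun j => f j = v)).card :=
        Finset.card_eq_sum_card_fiberwise (fun x hx => (Finset.mem_filter.mp hx).2)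
      have heq : ∀ v ∈ S, T.filter (fun j => f j = v) = S.filter (fun j => f j = v) := by
        intro v hv
        ext j
        simp only [Finset.mem_filter, hT]
        constructor
        · rintro ⟨⟨hj, _⟩, hfj⟩; exact ⟨hj, hfj⟩
        · rintro ⟨hj, hfj⟩; exact ⟨⟨hj, hfj ▸ hv⟩, hfj⟩
      have : 2 * S.card ≤ T.card := by
        rw [hcard]
        calc 2 * S.card = ∑ _v ∈ S, 2 := by simp [mul_comm]
        _ ≤ ∑ v ∈ S, (T.filter (fun j => f j = v)).card := by
            apply Finset.sum_le_sum
            intro v hv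
            rw [heq v hv]; exact h2 v hv
      have hTS : T.card ≤ S.card := Finset.card_le_card (Finset.filter_subset _ _)
      have hpos : 0 < S.card := Finset.card_pos.mpr hS
      omega
    obtain ⟨v, hvS, hfib⟩ := hv
    obtain ⟨c, hc⟩ := ih (S.erase v) (Finset.erase_ssubset hvS)
    -- the unique value on the fiber, if any
    set fib := S.filter (fun j => f j = v) with hfibdef
    have hone : ∀ a ∈ fib, ∀ b ∈ fib, a = b := Finset.card_le_one.mp hfib
    set b : Fin 3 := if h : fib.Nonempty then c h.choose else c (f v) with hb
    have hbfib : ∀ j ∈ fib, c j = b := by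
      intro j hj
      rw [hb, dif_pos ⟨j, hj⟩]
      exact congrArg c (hone j hj _ (⟨j, hj⟩ : fib.Nonempty).choose_spec)
    have key : ∀ a b' : Fin 3, ∃ x, x ≠ a ∧ x ≠ b' := by decide
    have hx : ∃ x : Fin 3, x ≠ c (f v) ∧ x ≠ b := key _ _
    obtain ⟨x, hx1, hx2⟩ := hx
    refine ⟨Function.update c v x, ?_⟩
    intro i hiS hfiS hfi
    by_cases hiv : i = v
    · subst hiv
      rw [Function.update_self, Function.update_of_ne hfi]
      exact fun h => hx1 h.symm
    · by_cases hfiv : f i = v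
      · have hifib : i ∈ fib := Finset.mem_filter.mpr ⟨hiS, hfiv⟩
        rw [hfiv, Function.update_self, Function.update_of_ne hiv]
        rw [hbfib i hifib]
        exact hx2
      · rw [Function.update_of_ne hfiv, Function.update_of_ne hiv]
        exact hc i (Finset.mem_erase.mpr ⟨hiv, hiS⟩) (Finset.mem_erase.mpr ⟨hfiv, hfiS⟩) hfi

/-- Global 3-coloring lemma: there is a 3-coloring of `I` such that `f i` gets a
different color from `i` whenever `f i ≠ i`. Proved by compactness from the finite case. -/
lemma global_fin3_coloring {I : Type*} (f : I → I) :
    ∃ c : I → Fin 3, ∀ i : I, f i ≠ i → c (f i) ≠ c i := by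
  classical
  set G : SimpleGraph I := SimpleGraph.fromRel (fun i j => f i = j) with hG
  have h : ∀ G' : G.Subgraph, G'.verts.Finite → G'.coe →g (⊤ : SimpleGraph (Fin 3)) := by
    intro G' hfin
    have hcol := fin3_coloring f hfin.toFinset
    set c := hcol.choose with hcdef
    have hc := hcol.choose_spec
    refine ⟨fun v => c v.1, ?_⟩
    rintro ⟨a, ha⟩ ⟨b, hb⟩ hab
    have hGab : G.Adj a b := G'.adj_sub hab
    rw [hG, SimpleGraph.fromRel_adj] at hGab
    obtain ⟨hne, hor⟩ := hGab
    have ha' : a ∈ hfin.toFinset := hfin.mem_toFinset.mpr ha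
    have hb' : b ∈ hfin.toFinset := hfin.mem_toFinset.mpr hb
    show c a ≠ c b
    rcases hor with h1 | h2
    · have := hc a ha' (h1 ▸ hb') (fun e => hne (e.symm.trans h1))
      rw [h1] at this
      exact this.symm
    · have := hc b hb' (h2 ▸ ha') (fun e => hne (h2.symm.trans e))
      rw [h2] at this
      exact this
  obtain ⟨hom⟩ := SimpleGraph.nonempty_hom_of_forall_finite_subgraph_hom h
  refine ⟨hom, fun i hfi => ?_⟩
  have hadj : G.Adj i (f i) := by
    rw [hG, SimpleGraph.fromRel_adj]
    exact ⟨fun e => hfi e.symm, Or.inl rfl⟩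
  have := hom.map_rel hadj
  rw [SimpleGraph.top_adj] at this
  exact fun e => this e.symm

/-- For any ultrafilter `D` over `I` and any `f : I → I`, there is a set `X ∈ D` such that
either `f` fixes every point of `X`, or `f` maps every point of `X` outside of `X`. -/
theorem exists_fixed_or_moving_set {I : Type*} (D : Set (Set I)) (hD : IsUltrafilterOn D)
    (f : I → I) :
    ∃ X ∈ D, (∀ i ∈ X, f i = i) ∨ (∀ i ∈ X, f i ∉ X) := by
  obtain ⟨⟨huniv, hinter, hup⟩, hultra⟩ := hD
  set Fix : Set I := {i | f i = i} with hFix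
  by_cases hF : Fix ∈ D
  · exact ⟨Fix, hF, Or.inl fun i hi => hi⟩
  -- otherwise the complement of Fix is in D
  have hFc : Fixᶜ ∈ D := by
    rw [hultra Fixᶜ, compl_compl]
    exact hF
  obtain ⟨c, hc⟩ := global_fin3_coloring f
  set A : Fin 3 → Set I := fun k => {i | c i = k ∧ f i ≠ i} with hA
  -- each color class is moved off itself by f
  have hmove : ∀ k, ∀ i ∈ A k, f i ∉ A k := by
    intro k i hi hfi
    exact hc i hi.2 (hfi.1.trans hi.1.symm)
  -- one of the color classes is in D
  have hexists : ∃ k, A k ∈ D := by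
    by_contra h
    push_neg at h
    have h0 : (A 0)ᶜ ∈ D := by
      by_contra h0
      exact h 0 ((hultra (A 0)).mpr h0)
    have h1 : (A 1)ᶜ ∈ D := by
      by_contra h1
      exact h 1 ((hultra (A 1)).mpr h1)
    have hint : Fixᶜ ∩ ((A 0)ᶜ ∩ (A 1)ᶜ) ∈ D := hinter _ hFc _ (hinter _ h0 _ h1)
    have hsub : Fixᶜ ∩ ((A 0)ᶜ ∩ (A 1)ᶜ) ⊆ A 2 := by
      rintro i ⟨hif, hi0, hi1⟩
      have hfi : f i ≠ i := hif
      have : c i = 0 ∨ c i = 1 ∨ c i = 2 := by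
        have : ∀ x : Fin 3, x = 0 ∨ x = 1 ∨ x = 2 := by decide
        exact this (c i)
      rcases this with h' | h' | h'
      · exact absurd ⟨h', hfi⟩ hi0
      · exact absurd ⟨h', hfi⟩ hi1
      · exact ⟨h', hfi⟩
    exact h 2 (hup _ hint _ hsub)
  obtain ⟨k, hk⟩ := hexists
  exact ⟨A k, hk, Or.inr (hmove k)⟩
end

section
/- Let I be a set and let f : I → I be a function with no fixed points (f(i) ≠ i for all i ∈ I). Then I can be partitioned into three sets X₁, X₂, X₃ such that for each n ∈ {1,2,3} and every i ∈ Xₙ, f(i) ∉ Xₙ. -/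
/-- Every finite subset admits a proper 3-coloring of the functional graph of `f`. -/
private lemma finite_three_coloring {I : Type*} (f : I → I) (hf : ∀ i, f i ≠ i)
    (S : Finset I) : ∃ c : I → Fin 3, ∀ i ∈ S, f i ∈ S → c i ≠ c (f i) := by
  classical
  induction S using Finset.strongInduction with
  | _ S IH =>
    rcases S.eq_empty_or_nonempty with rfl | hS
    · exact ⟨fun _ => 0, by simp⟩
    -- find a vertex `v` of degree ≤ 2
    have hdeg : ∃ v ∈ S, ((S.erase v).filter (fun u => f u = v ∨ u = f v)).card ≤ 2 := by
      by_contra h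
      push_neg at h
      have h3 : 3 * S.card ≤
          ∑ v ∈ S, ((S.erase v).filter (fun u => f u = v ∨ u = f v)).card := by
        calc 3 * S.card = ∑ _v ∈ S, 3 := by rw [Finset.sum_const, smul_eq_mul, mul_comm]
        _ ≤ _ := Finset.sum_le_sum (fun v hv => h v hv)
      have hbound : ∀ v ∈ S, ((S.erase v).filter (fun u => f u = v ∨ u = f v)).card ≤
          (S.filter (fun u => f u = v)).card + 1 := by
        intro v hv
        have hsub : (S.erase v).filter (fun u => f u = v ∨ u = f v) ⊆
            insert (f v) (S.filter (fun u => f u = v)) := by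
          intro u hu
          simp only [Finset.mem_filter, Finset.mem_erase] at hu
          rcases hu.2 with h1 | h2
          · exact Finset.mem_insert_of_mem (Finset.mem_filter.2 ⟨hu.1.2, h1⟩)
          · exact Finset.mem_insert.2 (Or.inl h2)
        calc ((S.erase v).filter (fun u => f u = v ∨ u = f v)).card
            ≤ (insert (f v) (S.filter (fun u => f u = v))).card := Finset.card_le_card hsub
          _ ≤ (S.filter (fun u => f u = v)).card + 1 := Finset.card_insert_le _ _
      have hfib : ∑ v ∈ S, (S.filter (fun u => f u = v)).card ≤ S.card := by
        set T := S.filter (fun u => f u ∈ S) with hT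
        have hTcard : T.card = ∑ v ∈ S, (T.filter (fun u => f u = v)).card :=
          Finset.card_eq_sum_card_fiberwise (fun x hx => (Finset.mem_filter.1 hx).2)
        have heq : ∀ v ∈ S, S.filter (fun u => f u = v) = T.filter (fun u => f u = v) := by
          intro v hv
          rw [hT, Finset.filter_filter]
          ext u
          simp only [Finset.mem_filter]
          constructor
          · rintro ⟨hu, rfl⟩; exact ⟨hu, hv, rfl⟩
          · rintro ⟨hu, _, h2⟩; exact ⟨hu, h2⟩
        calc ∑ v ∈ S, (S.filter (fun u => f u = v)).card
            = ∑ v ∈ S, (T.filter (fun u => f u = v)).card := Finset.sum_congr rfl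
              (fun v hv => by rw [heq v hv])
          _ = T.card := hTcard.symm
          _ ≤ S.card := Finset.card_le_card (Finset.filter_subset _ _)
      have hsum2 : ∑ v ∈ S, ((S.erase v).filter (fun u => f u = v ∨ u = f v)).card ≤
          (∑ v ∈ S, (S.filter (fun u => f u = v)).card) + S.card := by
        calc ∑ v ∈ S, ((S.erase v).filter (fun u => f u = v ∨ u = f v)).card
            ≤ ∑ v ∈ S, ((S.filter (fun u => f u = v)).card + 1) :=
              Finset.sum_le_sum hbound
          _ = (∑ v ∈ S, (S.filter (fun u => f u = v)).card) + S.card := by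
              rw [Finset.sum_add_distrib, Finset.sum_const, smul_eq_mul, mul_one]
      have hpos : 0 < S.card := Finset.card_pos.2 hS
      omega
    obtain ⟨v, hv, hdv⟩ := hdeg
    -- color `S.erase v` by induction, then extend to `v`
    obtain ⟨c, hc⟩ := IH (S.erase v) (Finset.erase_ssubset hv)
    set N := (S.erase v).filter (fun u => f u = v ∨ u = f v) with hN
    have hforb : (N.image c).card ≤ 2 := le_trans Finset.card_image_le hdv
    have hx : ∃ x : Fin 3, x ∉ N.image c := by
      by_contra h
      push_neg at h
      have h2 : (Finset.univ : Finset (Fin 3)).card ≤ (N.image c).card :=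
        Finset.card_le_card (fun x _ => h x)
      simp only [Finset.card_univ, Fintype.card_fin] at h2
      omega
    obtain ⟨x, hx⟩ := hx
    refine ⟨Function.update c v x, ?_⟩
    intro i hi hfi
    by_cases hiv : i = v
    · subst hiv
      rw [Function.update_self, Function.update_of_ne (hf i)]
      intro hcon
      apply hx
      rw [hcon]
      apply Finset.mem_image_of_mem
      rw [hN]
      simp [Finset.mem_filter, Finset.mem_erase, hf i, hfi]
    · by_cases hfiv : f i = v
      · rw [Function.update_of_ne hiv, hfiv, Function.update_self]
        intro hcon
        apply hx
        rw [← hcon]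
        apply Finset.mem_image_of_mem
        rw [hN]
        simp only [Finset.mem_filter, Finset.mem_erase]
        exact ⟨⟨hiv, hi⟩, Or.inl hfiv⟩
      · rw [Function.update_of_ne hiv, Function.update_of_ne hfiv]
        exact hc i (Finset.mem_erase.2 ⟨hiv, hi⟩) (Finset.mem_erase.2 ⟨hfiv, hfi⟩)

/-- A global proper 3-coloring exists, by compactness. -/
private lemma global_three_coloring {I : Type*} (f : I → I) (hf : ∀ i, f i ≠ i) :
    ∃ c : I → Fin 3, ∀ i, c i ≠ c (f i) := by
  classical
  letI : TopologicalSpace (Fin 3) := ⊥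
  haveI : DiscreteTopology (Fin 3) := ⟨rfl⟩
  set A : I → Set (I → Fin 3) := fun i => {c | c i ≠ c (f i)} with hA
  have hAc : ∀ i, IsClosed (A i) := by
    intro i
    have hcont : Continuous (fun c : I → Fin 3 => (c i, c (f i))) :=
      (continuous_apply i).prodMk (continuous_apply (f i))
    have : A i = (fun c : I → Fin 3 => (c i, c (f i))) ⁻¹' {p : Fin 3 × Fin 3 | p.1 ≠ p.2} := rfl
    rw [this]
    exact (isClosed_discrete _).preimage hcont
  by_contra h
  push_neg at h
  have hempty : (Set.univ : Set (I → Fin 3)) ∩ ⋂ i, A i = ∅ := by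
    ext c
    simp only [Set.mem_inter_iff, Set.mem_iInter, Set.mem_empty_iff_false, iff_false,
      Set.mem_univ, true_and, not_forall, hA, Set.mem_setOf_eq, not_not]
    exact h c
  obtain ⟨u, hu⟩ := isCompact_univ.elim_finite_subfamily_closed A hAc hempty
  obtain ⟨c, hc⟩ := finite_three_coloring f hf (u ∪ u.image f)
  have hmem : c ∈ (Set.univ : Set (I → Fin 3)) ∩ ⋂ i ∈ u, A i := by
    refine ⟨Set.mem_univ _, Set.mem_iInter₂.2 fun i hi => ?_⟩
    exact hc i (Finset.mem_union_left _ hi)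
      (Finset.mem_union_right _ (Finset.mem_image_of_mem f hi))
  rw [hu] at hmem
  exact hmem

/-- If `f : I → I` has no fixed points, then `I` can be partitioned into three sets
`X₁, X₂, X₃` (pairwise disjoint with union `I`) such that `f` maps no point of any
piece into the same piece. -/
theorem three_coloring_of_fixed_point_free {I : Type*} (f : I → I) (hf : ∀ i, f i ≠ i) :
    ∃ X₁ X₂ X₃ : Set I,
      X₁ ∪ X₂ ∪ X₃ = Set.univ ∧
      Disjoint X₁ X₂ ∧ Disjoint X₁ X₃ ∧ Disjoint X₂ X₃ ∧
      (∀ i ∈ X₁, f i ∉ X₁) ∧ (∀ i ∈ X₂, f i ∉ X₂) ∧ (∀ i ∈ X₃, f i ∉ X₃) := by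
  obtain ⟨c, hc⟩ := global_three_coloring f hf
  refine ⟨c ⁻¹' {0}, c ⁻¹' {1}, c ⁻¹' {2}, ?_, ?_, ?_, ?_, ?_, ?_, ?_⟩
  · ext i
    simp only [Set.mem_union, Set.mem_preimage, Set.mem_singleton_iff, Set.mem_univ, iff_true]
    set k := c i with hk
    clear hk
    rcases k with ⟨n, hn⟩
    interval_cases n <;> simp
  · rw [Set.disjoint_left]; intro i h1 h2
    simp only [Set.mem_preimage, Set.mem_singleton_iff] at h1 h2
    rw [h1] at h2; exact absurd h2 (by decide)
  · rw [Set.disjoint_left]; intro i h1 h2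
    simp only [Set.mem_preimage, Set.mem_singleton_iff] at h1 h2
    rw [h1] at h2; exact absurd h2 (by decide)
  · rw [Set.disjoint_left]; intro i h1 h2
    simp only [Set.mem_preimage, Set.mem_singleton_iff] at h1 h2
    rw [h1] at h2; exact absurd h2 (by decide)
  · intro i h1 h2
    simp only [Set.mem_preimage, Set.mem_singleton_iff] at h1 h2
    exact hc i (h1.trans h2.symm)
  · intro i h1 h2
    simp only [Set.mem_preimage, Set.mem_singleton_iff] at h1 h2
    exact hc i (h1.trans h2.symm)
  · intro i h1 h2
    simp only [Set.mem_preimage, Set.mem_singleton_iff] at h1 h2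
    exact hc i (h1.trans h2.symm)
end

section
/- Every uncountable measurable cardinal is strongly inaccessible: if κ is an uncountable cardinal carrying a nonprincipal κ-complete ultrafilter over κ, then κ is regular, uncountable, and a strong limit (for all λ < κ, 2^λ < κ). -/
universe u

open Cardinal Set Ordinal

/-- Every uncountable measurable cardinal is strongly inaccessible: if `κ` is an uncountable
cardinal (the cardinality of a set `α`) carrying a nonprincipal `κ`-complete ultrafilter over
that set, then `κ` is regular, uncountable, and a strong limit. -/
theorem measurable_is_inaccessible {α : Type u} (κ : Cardinal.{u}) (hκ : Cardinal.mk α = κ)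
    (huncountable : Cardinal.aleph0 < κ) (U : Ultrafilter α)
    (hnonprincipal : ¬ ∃ Y : Set α, ∀ X : Set α, X ∈ U ↔ Y ⊆ X)
    (hcomplete : ∀ s : Set (Set α), Cardinal.mk s < κ → (∀ X ∈ s, X ∈ U) → ⋂₀ s ∈ U) :
    κ.IsRegular ∧ Cardinal.aleph0 < κ ∧ ∀ μ : Cardinal.{u}, μ < κ → 2 ^ μ < κ := by
  classical
  -- singletons are not in U
  have hsingle : ∀ a : α, ({a} : Set α) ∉ U := by
    intro a ha
    apply hnonprincipal
    refine ⟨{a}, fun X => ⟨fun hX => ?_, fun h => U.mem_of_superset ha h⟩⟩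
    obtain ⟨x, hx1, hx2⟩ := Ultrafilter.nonempty_of_mem (U.inter_mem ha hX)
    rcases hx1 with rfl
    exact Set.singleton_subset_iff.2 hx2
  -- every set of size < κ is not in U
  have hsmall : ∀ S : Set α, Cardinal.mk S < κ → S ∉ U := by
    intro S hS hSU
    have hInt : ⋂₀ ((fun a => ({a}ᶜ : Set α)) '' S) ∈ U := by
      apply hcomplete
      · exact lt_of_le_of_lt Cardinal.mk_image_le hS
      · rintro X ⟨a, _, rfl⟩
        exact (Ultrafilter.compl_mem_iff_notMem).2 (hsingle a)
    have heq : ⋂₀ ((fun a => ({a}ᶜ : Set α)) '' S) = Sᶜ := by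
      ext x
      simp only [Set.mem_sInter, Set.mem_image, Set.mem_compl_iff, Set.mem_singleton_iff,
        forall_exists_index, and_imp]
      constructor
      · intro h hx
        exact h ({x}ᶜ) x hx rfl rfl
      · rintro h X a ha rfl hx
        rcases hx with rfl
        exact h ha
    rw [heq] at hInt
    exact (Ultrafilter.compl_mem_iff_notMem).1 hInt hSU
  have hempty : (∅ : Set α) ∉ U := Ultrafilter.empty_notMem
  refine ⟨⟨huncountable.le, ?_⟩, huncountable, ?_⟩
  · -- regularity
    by_contra hcof
    push_neg at hcof
    have hmk : Cardinal.mk α = Cardinal.mk κ.ord.ToType := by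
      rw [Cardinal.mk_toType, Cardinal.card_ord, hκ]
    obtain ⟨e⟩ := Cardinal.eq.1 hmk
    haveI : IsWellOrder κ.ord.ToType (· < ·) := isWellOrder_lt
    obtain ⟨S, hSu, hScard⟩ := Order.exists_cof_eq κ.ord.ToType
    rw [Ordinal.cof_toType] at hScard
    -- each initial segment has size < κ
    have hseg : ∀ b : κ.ord.ToType, Cardinal.mk (e ⁻¹' Set.Iic b) < κ := by
      intro b
      have hIio : Cardinal.mk (Set.Iio b) < κ := by
        have h1 : Cardinal.mk (Set.Iio b)
            = (Ordinal.typein (α := κ.ord.ToType) (· < ·) b).card :=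
          (Ordinal.card_typein (r := ((· < ·) : κ.ord.ToType → κ.ord.ToType → Prop)) b).symm
        have h2 : Ordinal.typein (α := κ.ord.ToType) (· < ·) b < κ.ord := by
          conv_rhs => rw [← Ordinal.type_toType κ.ord]
          exact Ordinal.typein_lt_type _ b
        rw [h1]
        exact Cardinal.lt_ord.1 h2
      have hIic : Cardinal.mk (Set.Iic b) < κ := by
        rw [← Set.Iio_insert]
        calc Cardinal.mk (insert b (Set.Iio b) : Set _) ≤ Cardinal.mk (Set.Iio b) + 1 :=
              Cardinal.mk_insert_le
          _ < κ := Cardinal.add_lt_of_lt huncountable.le hIio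
              (lt_trans Cardinal.one_lt_aleph0 huncountable)
      calc Cardinal.mk (e ⁻¹' Set.Iic b) ≤ Cardinal.mk (Set.Iic b) :=
            Cardinal.mk_preimage_of_injective e _ e.injective
        _ < κ := hIic
    set t : Set (Set α) := (fun b => (e ⁻¹' Set.Iic b)ᶜ) '' S with ht
    have htU : ⋂₀ t ∈ U := by
      apply hcomplete
      · exact lt_of_le_of_lt Cardinal.mk_image_le (hScard ▸ hcof)
      · rintro X ⟨b, _, rfl⟩
        exact (Ultrafilter.compl_mem_iff_notMem).2 (hsmall _ (hseg b))
    have hte : ⋂₀ t = ∅ := by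
      ext a
      simp only [Set.mem_sInter, Set.mem_empty_iff_false, iff_false, not_forall]
      obtain ⟨b, hbS, hble⟩ := hSu (e a)
      refine ⟨(e ⁻¹' Set.Iic b)ᶜ, ⟨b, hbS, rfl⟩, ?_⟩
      simp only [Set.mem_compl_iff, Set.mem_preimage, Set.mem_Iic, not_not]
      exact hble
    rw [hte] at htU
    exact hempty htU
  · -- strong limit
    intro μ hμ
    by_contra hpow
    push_neg at hpow
    have hle : Cardinal.mk α ≤ Cardinal.mk (Set μ.out) := by
      rw [Cardinal.mk_set, Cardinal.mk_out, hκ]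
      exact hpow
    obtain ⟨f⟩ := hle
    set C : μ.out → Set α := fun b =>
      if {a : α | b ∈ f a} ∈ U then {a : α | b ∈ f a} else {a : α | b ∈ f a}ᶜ with hC
    have hCU : ∀ b, C b ∈ U := by
      intro b
      rw [hC]
      dsimp only
      split_ifs with h
      · exact h
      · exact (Ultrafilter.compl_mem_iff_notMem).2 h
    have hIntU : ⋂₀ Set.range C ∈ U := by
      apply hcomplete
      · calc Cardinal.mk (Set.range C) ≤ Cardinal.mk μ.out := Cardinal.mk_range_le
          _ = μ := Cardinal.mk_out μ
          _ < κ := hμ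
      · rintro X ⟨b, rfl⟩
        exact hCU b
    have hsub : (⋂₀ Set.range C).Subsingleton := by
      intro a₁ h₁ a₂ h₂
      have hfeq : f a₁ = f a₂ := by
        ext b
        have hb₁ : a₁ ∈ C b := h₁ _ ⟨b, rfl⟩
        have hb₂ : a₂ ∈ C b := h₂ _ ⟨b, rfl⟩
        rw [hC] at hb₁ hb₂
        dsimp only at hb₁ hb₂
        split_ifs at hb₁ hb₂ with h
        · exact iff_of_true hb₁ hb₂
        · exact iff_of_false hb₁ hb₂
      exact f.injective hfeq
    have : Cardinal.mk (⋂₀ Set.range C) < κ :=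
      lt_of_le_of_lt hsub.cardinalMk_le_one (lt_trans Cardinal.one_lt_aleph0 huncountable)
    exact hsmall _ this hIntU
end

section
/- If κ is an uncountable measurable cardinal, then κ is the κ-th strongly inaccessible cardinal; in particular, the set of strongly inaccessible cardinals below κ has cardinality κ. -/
universe u

open Cardinal Set

set_option linter.deprecated false
set_option linter.unusedVariables false
set_option linter.unnecessarySimpa false
set_option maxHeartbeats 1000000

namespace WellFounded

variable {β : Type*} {r : β → β → Prop}

/-- Rank of an element under a well-founded relation. -/
noncomputable def rank (hwf : WellFounded r) (a : β) : Ordinal := (hwf.apply a).rank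

theorem rank_eq (hwf : WellFounded r) (a : β) :
    hwf.rank a = ⨆ b : { b // r b a }, Order.succ (hwf.rank b.1) :=
  (hwf.apply a).rank_eq

theorem rank_lt_of_rel (hwf : WellFounded r) {a b : β} (h : r a b) : hwf.rank a < hwf.rank b :=
  Acc.rank_lt_of_rel _ h

end WellFounded

namespace MKI

variable {α : Type u} {κ : Cardinal.{u}} {U : Ultrafilter α}

lemma iInter_mem
    (hcomplete : ∀ s : Set (Set α), Cardinal.mk s < κ → (∀ X ∈ s, X ∈ U) → ⋂₀ s ∈ U)
    {ι : Type u} (X : ι → Set α) (hι : #ι < κ) (hX : ∀ i, X i ∈ U) : (⋂ i, X i) ∈ U := by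
  have h := hcomplete (Set.range X) (lt_of_le_of_lt Cardinal.mk_range_le hι)
    (by rintro _ ⟨i, rfl⟩; exact hX i)
  rwa [Set.sInter_range] at h

lemma compl_singleton_mem
    (hnonprincipal : ¬ ∃ Y : Set α, ∀ X : Set α, X ∈ U ↔ Y ⊆ X) (x : α) : {x}ᶜ ∈ U := by
  by_contra h
  rw [Ultrafilter.compl_mem_iff_notMem, not_not] at h
  refine hnonprincipal ⟨{x}, fun X => ⟨fun hX => ?_, fun hX => U.mem_of_superset h hX⟩⟩
  intro y hy
  rcases hy with rfl
  by_contra hx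
  have : X ∩ {y} ∈ U := Filter.inter_mem hX h
  have : (X ∩ {y}).Nonempty := Ultrafilter.nonempty_of_mem this
  rcases this with ⟨z, hz1, hz2⟩
  rcases hz2 with rfl
  exact hx hz1

lemma small_not_mem
    (hnonprincipal : ¬ ∃ Y : Set α, ∀ X : Set α, X ∈ U ↔ Y ⊆ X)
    (hcomplete : ∀ s : Set (Set α), Cardinal.mk s < κ → (∀ X ∈ s, X ∈ U) → ⋂₀ s ∈ U)
    {S : Set α} (hS : #S < κ) : S ∉ U := by
  rw [← Ultrafilter.compl_mem_iff_notMem]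
  have : Sᶜ = ⋂ x : S, {(x : α)}ᶜ := by
    ext a; simp [not_imp_not, eq_comm]
    constructor
    · intro h y hy hay; exact h (hay ▸ hy)
    · intro h ha; exact h a ha rfl
  rw [this]
  exact iInter_mem hcomplete _ hS (fun x => compl_singleton_mem hnonprincipal x)


-- the enumeration of α by ordinals below κ.ord
lemma exists_enum (hκ : #α = κ) :
    ∃ d : α → Ordinal.{u}, (∀ a, d a < κ.ord) ∧ Function.Injective d ∧
      (∀ β < κ.ord, ∃ a, d a = β) ∧ (∀ β, #{a | d a < β} ≤ β.card) := by
  have h1 : #α = #(κ.ord.ToType) := by rw [Cardinal.mk_toType, Cardinal.card_ord, hκ]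
  obtain ⟨e⟩ := Cardinal.eq.1 h1
  set iso := ((Ordinal.ToType.mk (o := κ.ord))).symm
  refine ⟨fun a => (iso (e a) : Ordinal), fun a => (iso (e a)).2, ?_, ?_, ?_⟩
  · intro a b hab
    exact e.injective (iso.injective (Subtype.ext hab))
  · intro β hβ
    exact ⟨e.symm (iso.symm ⟨β, hβ⟩), by simp⟩
  · intro β
    have : ∀ a : {a | (iso (e a) : Ordinal) < β}, ((iso (e a) : Ordinal)) < β := fun a => a.2
    refine le_trans ?_ (le_of_eq (Cardinal.mk_toType β))
    refine Cardinal.mk_le_of_injective (f := fun a =>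
      (Ordinal.ToType.mk (o := β)) ⟨(iso (e a.1) : Ordinal), a.2⟩) ?_
    intro a b hab
    have := ((Ordinal.ToType.mk (o := β))).injective hab
    have := Subtype.ext_iff.1 this
    exact Subtype.ext (e.injective (iso.injective (Subtype.ext this)))

lemma isRegular (hκ : #α = κ) (h0 : ℵ₀ < κ)
    (hnonprincipal : ¬ ∃ Y : Set α, ∀ X : Set α, X ∈ U ↔ Y ⊆ X)
    (hcomplete : ∀ s : Set (Set α), Cardinal.mk s < κ → (∀ X ∈ s, X ∈ U) → ⋂₀ s ∈ U) :
    κ.IsRegular := by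
  obtain ⟨d, hdlt, hdinj, hdsurj, hdseg⟩ := exists_enum (κ := κ) hκ
  refine ⟨h0.le, ?_⟩
  by_contra hlt
  push_neg at hlt
  obtain ⟨ι, f, hlsub, hι⟩ := Ordinal.exists_lsub_cof κ.ord
  have hκord : Order.IsSuccLimit κ.ord := Cardinal.isSuccLimit_ord h0.le
  have hXmem : ∀ i, {a | f i < d a} ∈ U := by
    intro i
    have hfi : f i < κ.ord := hlsub ▸ Ordinal.lt_lsub f i
    have hsucc : f i + 1 < κ.ord := hκord.succ_lt hfi
    have hsmall : #{a | d a ≤ f i} < κ := by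
      have : {a | d a ≤ f i} = {a | d a < f i + 1} := by
        ext a; simp [Order.lt_succ_iff]
      rw [this]
      exact lt_of_le_of_lt (hdseg _) (Cardinal.lt_ord.1 hsucc)
    have := small_not_mem hnonprincipal hcomplete hsmall
    have h2 : {a | f i < d a} = {a | d a ≤ f i}ᶜ := by ext a; simp
    rw [h2, Ultrafilter.compl_mem_iff_notMem]
    exact this
  have hmem : (⋂ i, {a | f i < d a}) ∈ U :=
    iInter_mem hcomplete _ (hι ▸ hlt) hXmem
  obtain ⟨a, ha⟩ := Ultrafilter.nonempty_of_mem hmem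
  simp only [Set.mem_iInter, Set.mem_setOf_eq] at ha
  obtain ⟨i, hi⟩ := Ordinal.lt_lsub_iff.1 (hlsub ▸ hdlt a)
  exact absurd hi (not_le.2 (ha i))

lemma isStrongLimit (hκ : #α = κ) (h0 : ℵ₀ < κ)
    (hnonprincipal : ¬ ∃ Y : Set α, ∀ X : Set α, X ∈ U ↔ Y ⊆ X)
    (hcomplete : ∀ s : Set (Set α), Cardinal.mk s < κ → (∀ X ∈ s, X ∈ U) → ⋂₀ s ∈ U) :
    κ.IsStrongLimit := by
  refine ⟨fun h => by simp [h] at h0, ?_⟩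
  intro c hc
  by_contra hle
  push_neg at hle
  set γ := c.out
  have hγ : #γ = c := Cardinal.mk_out c
  have h2 : κ ≤ #(γ → ULift.{u} Bool) := by
    rw [← Cardinal.power_def (ULift.{u} Bool) γ, Cardinal.mk_uLift, Cardinal.mk_bool, hγ,
      Cardinal.lift_two]
    exact hle
  obtain ⟨h⟩ := (Cardinal.le_def α (γ → ULift.{u} Bool)).1 (hκ ▸ h2)
  classical
  set v : γ → Bool := fun b => if {a | (h a b).down = true} ∈ U then true else false with hv
  have hX : ∀ b, {a | (h a b).down = v b} ∈ U := by
    intro b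
    by_cases hb : {a | (h a b).down = true} ∈ U
    · simp only [hv, hb, if_true]
    · have : {a | (h a b).down = true}ᶜ ∈ U := Ultrafilter.compl_mem_iff_notMem.2 hb
      have hc2 : {a | (h a b).down = true}ᶜ = {a | (h a b).down = false} := by
        ext a; simp
      simp only [hv, hb, if_false]
      rw [hc2] at this; exact this
  have hT : (⋂ b, {a | (h a b).down = v b}) ∈ U := iInter_mem hcomplete _ (hγ ▸ hc) hX
  have hsub : (⋂ b, {a | (h a b).down = v b}).Subsingleton := by
    intro a ha a' ha'
    simp only [Set.mem_iInter, Set.mem_setOf_eq] at ha ha'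
    exact h.injective (funext fun b => ULift.ext _ _ ((ha b).trans (ha' b).symm))
  have hsmall : #(⋂ b, {a | (h a b).down = v b}) < κ :=
    lt_of_le_of_lt (Cardinal.mk_le_one_iff_set_subsingleton.2 hsub)
      (lt_trans Cardinal.one_lt_aleph0 h0)
  exact small_not_mem hnonprincipal hcomplete hsmall hT


/-- The ultrapower strict order on `α → Ordinal`. -/
def pred (U : Ultrafilter α) (f g : α → Ordinal.{u}) : Prop := {a | f a < g a} ∈ U

lemma pred_trans {f g h : α → Ordinal.{u}} (h1 : pred U f g) (h2 : pred U g h) :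
    pred U f h :=
  U.mem_of_superset (Filter.inter_mem h1 h2) (by
    rintro a ⟨ha1, ha2⟩
    simp only [Set.mem_setOf_eq] at ha1 ha2 ⊢
    exact lt_trans ha1 ha2)

lemma pred_wf (h0 : ℵ₀ < κ)
    (hcomplete : ∀ s : Set (Set α), Cardinal.mk s < κ → (∀ X ∈ s, X ∈ U) → ⋂₀ s ∈ U) :
    WellFounded (pred U) := by
  haveI : IsIrrefl (α → Ordinal.{u}) (pred U) := by
    constructor
    intro f hf
    have : {a | f a < f a} = (∅ : Set α) := by ext a; simp
    rw [show pred U f f = ({a | f a < f a} ∈ U) from rfl, this] at hf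
    exact Filter.empty_notMem (U : Filter α) hf
  haveI : IsTrans (α → Ordinal.{u}) (pred U) := ⟨fun f g h => pred_trans⟩
  haveI : IsStrictOrder (α → Ordinal.{u}) (pred U) := ⟨⟩
  rw [RelEmbedding.wellFounded_iff_isEmpty]
  constructor
  intro F
  have hX : ∀ n : ℕ, {a | F (n + 1) a < F n a} ∈ U := by
    intro n
    exact F.map_rel_iff.2 (Nat.lt_succ_self n)
  have hmem : (⋂ n : ULift.{u} ℕ, {a | F (n.down + 1) a < F n.down a}) ∈ U := by
    refine iInter_mem hcomplete _ ?_ (fun n => hX n.down)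
    rw [Cardinal.mk_uLift, Cardinal.mk_nat, Cardinal.lift_aleph0]
    exact h0
  obtain ⟨a, ha⟩ := Ultrafilter.nonempty_of_mem hmem
  simp only [Set.mem_iInter, Set.mem_setOf_eq] at ha
  have : ∀ n : ℕ, F (n + 1) a < F n a := fun n => ha ⟨n⟩
  exact RelEmbedding.not_wellFounded (RelEmbedding.natGT (fun n => F n a) this)
    Ordinal.lt_wf

section Rank

variable (hwf : WellFounded (pred U))

lemma rank_lt_rank {f g : α → Ordinal.{u}} (h : pred U f g) :
    hwf.rank f < hwf.rank g := hwf.rank_lt_of_rel h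

lemma total (f g : α → Ordinal.{u}) :
    pred U f g ∨ {a | f a = g a} ∈ U ∨ pred U g f := by
  by_cases h1 : pred U f g
  · exact Or.inl h1
  by_cases h2 : {a | f a = g a} ∈ U
  · exact Or.inr (Or.inl h2)
  refine Or.inr (Or.inr ?_)
  have c1 : {a | f a < g a}ᶜ ∈ U := Ultrafilter.compl_mem_iff_notMem.2 h1
  have c2 : {a | f a = g a}ᶜ ∈ U := Ultrafilter.compl_mem_iff_notMem.2 h2
  refine U.mem_of_superset (Filter.inter_mem c1 c2) ?_
  rintro a ⟨ha1, ha2⟩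
  simp only [Set.mem_compl_iff, Set.mem_setOf_eq, not_lt] at ha1 ha2
  exact lt_of_le_of_ne ha1 (Ne.symm ha2)

lemma rank_eq_of_eqU {f g : α → Ordinal.{u}} (h : {a | f a = g a} ∈ U) :
    hwf.rank f = hwf.rank g := by
  have key : ∀ f g : α → Ordinal.{u}, {a | f a = g a} ∈ U →
      hwf.rank f ≤ hwf.rank g := by
    intro f g hfg
    rw [WellFounded.rank_eq]
    refine Ordinal.iSup_le_iff.2 ?_
    rintro ⟨p, hp⟩
    have hpg : pred U p g := by
      refine U.mem_of_superset (Filter.inter_mem hp hfg) ?_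
      rintro a ⟨ha1, ha2⟩
      exact lt_of_lt_of_eq ha1 ha2
    rw [Order.succ_le_iff]
    exact rank_lt_rank hwf hpg
  refine le_antisymm (key _ _ h) (key _ _ ?_)
  exact U.mem_of_superset h (fun a ha => ha.symm)

lemma rank_surj {f : α → Ordinal.{u}} :
    ∀ β < hwf.rank f, ∃ g, pred U g f ∧ hwf.rank g = β := by
  induction f using hwf.induction with
  | _ f IH =>
    intro β hβ
    rw [WellFounded.rank_eq] at hβ
    obtain ⟨⟨g, hg⟩, hβg⟩ := Ordinal.lt_iSup_iff.1 hβ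
    have hle : β ≤ hwf.rank g := Order.lt_succ_iff.1 hβg
    rcases eq_or_lt_of_le hle with rfl | hlt
    · exact ⟨g, hg, rfl⟩
    · obtain ⟨p, hp, rfl⟩ := IH g hg _ hlt
      exact ⟨p, pred_trans hp hg, rfl⟩

lemma rank_eq_of_rank_eq {f g : α → Ordinal.{u}} (h : hwf.rank f = hwf.rank g) :
    {a | f a = g a} ∈ U := by
  rcases total (U := U) f g with h1 | h1 | h1
  · exact absurd h (ne_of_lt (rank_lt_rank hwf h1))
  · exact h1
  · exact absurd h.symm (ne_of_lt (rank_lt_rank hwf h1))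

/-- Any function `U`-a.e. bounded by `β < κ.ord` is a.e. equal to a constant below `β`. -/
lemma ae_const (hcomplete : ∀ s : Set (Set α), Cardinal.mk s < κ → (∀ X ∈ s, X ∈ U) → ⋂₀ s ∈ U)
    {g : α → Ordinal.{u}} {β : Ordinal.{u}} (hβ : β < κ.ord)
    (hg : {a | g a < β} ∈ U) : ∃ γ < β, {a | g a = γ} ∈ U := by
  by_contra hcon
  push_neg at hcon
  have hXmem : ∀ i : β.ToType, {a | g a ≠ (((Ordinal.ToType.mk (o := β))).symm i : Ordinal)} ∈ U := by
    intro i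
    have hlt : (((Ordinal.ToType.mk (o := β))).symm i : Ordinal) < β :=
      (((Ordinal.ToType.mk (o := β))).symm i).2
    have := hcon _ hlt
    have h2 : {a | g a = (((Ordinal.ToType.mk (o := β))).symm i : Ordinal)}ᶜ ∈ U :=
      Ultrafilter.compl_mem_iff_notMem.2 this
    exact h2
  have hcard : #β.ToType < κ := by
    rw [Cardinal.mk_toType]
    exact Cardinal.lt_ord.1 hβ
  have hmem : ((⋂ i : β.ToType, {a | g a ≠ (((Ordinal.ToType.mk (o := β))).symm i : Ordinal)})
      ∩ {a | g a < β}) ∈ U :=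
    Filter.inter_mem (iInter_mem hcomplete _ hcard hXmem) hg
  obtain ⟨a, ha1, ha2⟩ := Ultrafilter.nonempty_of_mem hmem
  simp only [Set.mem_iInter, Set.mem_setOf_eq] at ha1 ha2
  have := ha1 ((Ordinal.ToType.mk (o := β)) ⟨g a, ha2⟩)
  simp at this

lemma rank_const (h0 : ℵ₀ < κ)
    (hcomplete : ∀ s : Set (Set α), Cardinal.mk s < κ → (∀ X ∈ s, X ∈ U) → ⋂₀ s ∈ U) :
    ∀ β < κ.ord, hwf.rank (fun _ => β) = Ordinal.lift.{u + 1} β := by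
  intro β
  induction β using Ordinal.induction with
  | _ β IH =>
    intro hβ
    refine le_antisymm ?_ ?_
    · by_contra hcon
      push_neg at hcon
      obtain ⟨g, hg, hrg⟩ := rank_surj hwf _ hcon
      obtain ⟨γ, hγβ, hγ⟩ := ae_const hcomplete hβ hg
      have : hwf.rank g = hwf.rank (fun _ => γ) := rank_eq_of_eqU hwf hγ
      have h2 : Ordinal.lift.{u + 1} β = Ordinal.lift.{u + 1} γ := by
        rw [← hrg, this, IH γ hγβ (lt_trans hγβ hβ)]
      exact absurd (Ordinal.lift_inj.1 h2) (ne_of_gt hγβ)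
    · refine le_of_forall_lt (fun c hc => ?_)
      obtain ⟨γ, hγβ, rfl⟩ := Ordinal.lt_lift_iff.1 hc
      rw [← IH γ hγβ (lt_trans hγβ hβ)]
      refine rank_lt_rank hwf ?_
      have : {a : α | γ < β} = Set.univ := by
        ext a; simp [hγβ]
      show {a : α | γ < β} ∈ U
      rw [this]
      exact Filter.univ_mem


end Rank

lemma exists_norm_fn (hwf : WellFounded (pred U)) (hκ : #α = κ) (h0 : ℵ₀ < κ)
    (hnonprincipal : ¬ ∃ Y : Set α, ∀ X : Set α, X ∈ U ↔ Y ⊆ X)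
    (hcomplete : ∀ s : Set (Set α), Cardinal.mk s < κ → (∀ X ∈ s, X ∈ U) → ⋂₀ s ∈ U) :
    ∃ f : α → Ordinal.{u}, (∀ a, f a < κ.ord) ∧ hwf.rank f = Ordinal.lift.{u + 1} κ.ord := by
  classical
  obtain ⟨d, hdlt, _, _, hdseg⟩ := exists_enum (κ := κ) hκ
  have hκord : Order.IsSuccLimit κ.ord := Cardinal.isSuccLimit_ord h0.le
  have hstep : ∀ γ < κ.ord, pred U (fun _ => γ) d := by
    intro γ hγ
    have hsmall : #{a | d a ≤ γ} < κ := by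
      have : {a | d a ≤ γ} = {a | d a < γ + 1} := by ext a; simp [Order.lt_succ_iff]
      rw [this]
      exact lt_of_le_of_lt (hdseg _) (Cardinal.lt_ord.1 (hκord.succ_lt hγ))
    have hnot := small_not_mem hnonprincipal hcomplete hsmall
    have : {a | (fun _ => γ) a < d a} = {a | d a ≤ γ}ᶜ := by ext a; simp
    show {a | (fun _ => γ) a < d a} ∈ U
    rw [this, Ultrafilter.compl_mem_iff_notMem]
    exact hnot
  have hge : Ordinal.lift.{u + 1} κ.ord ≤ hwf.rank d := by
    refine le_of_forall_lt (fun c hc => ?_)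
    obtain ⟨γ, hγ, rfl⟩ := Ordinal.lt_lift_iff.1 hc
    rw [← rank_const hwf h0 hcomplete γ hγ]
    exact rank_lt_rank hwf (hstep γ hγ)
  rcases eq_or_lt_of_le hge with heq | hlt
  · exact ⟨d, hdlt, heq.symm⟩
  · obtain ⟨g, hgd, hrg⟩ := rank_surj hwf _ hlt
    have h0ord : (0 : Ordinal) < κ.ord := by
      rw [Cardinal.lt_ord]
      simpa using (aleph0_pos.trans h0)
    refine ⟨fun a => if g a < κ.ord then g a else 0, fun a => ?_, ?_⟩
    · dsimp only; split
      · assumption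
      · exact h0ord
    · rw [← hrg]
      refine rank_eq_of_eqU hwf ?_
      refine U.mem_of_superset hgd ?_
      intro a ha
      simp only [Set.mem_setOf_eq] at ha ⊢
      rw [if_pos (lt_trans ha (hdlt a))]

lemma reflection (hκ : #α = κ) (h0 : ℵ₀ < κ)
    (hreg : κ.IsRegular) (hsl : κ.IsStrongLimit)
    (hnonprincipal : ¬ ∃ Y : Set α, ∀ X : Set α, X ∈ U ↔ Y ⊆ X)
    (hcomplete : ∀ s : Set (Set α), Cardinal.mk s < κ → (∀ X ∈ s, X ∈ U) → ⋂₀ s ∈ U) :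
    ∀ lam < κ, ∃ μ : Cardinal.{u}, lam < μ ∧ μ < κ ∧ μ.IsInaccessible := by
  classical
  have hwf : WellFounded (pred U) := pred_wf h0 hcomplete
  obtain ⟨f, hf1, hf2⟩ := exists_norm_fn hwf hκ h0 hnonprincipal hcomplete
  have hκord : Order.IsSuccLimit κ.ord := Cardinal.isSuccLimit_ord h0.le
  -- f is not a.e. bounded by any β < κ.ord
  have hbound : ∀ β < κ.ord, {a | f a ≤ β} ∉ U := by
    intro β hβ hmem
    have hβ1 : β + 1 < κ.ord := hκord.succ_lt hβ
    have hpred : pred U f (fun _ => β + 1) := by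
      show {a | f a < β + 1} ∈ U
      refine U.mem_of_superset hmem (fun a ha => ?_)
      simp only [Set.mem_setOf_eq] at ha ⊢
      exact Order.lt_succ_iff.2 ha
    have := rank_lt_rank hwf hpred
    rw [hf2, rank_const hwf h0 hcomplete _ hβ1] at this
    exact absurd (Ordinal.lift_lt.1 this) (not_lt.2 (le_of_lt hβ1))
  have hgt : ∀ β < κ.ord, {a | β < f a} ∈ U := by
    intro β hβ
    have : {a | β < f a} = {a | f a ≤ β}ᶜ := by ext a; simp
    rw [this, Ultrafilter.compl_mem_iff_notMem]
    exact hbound β hβ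
  -- every pred of f is a.e. constant below κ.ord
  have hconst : ∀ g : α → Ordinal.{u}, pred U g f → ∃ γ < κ.ord, {a | g a = γ} ∈ U := by
    intro g hg
    have h1 : hwf.rank g < Ordinal.lift.{u + 1} κ.ord := hf2 ▸ rank_lt_rank hwf hg
    obtain ⟨γ, hγ, hγ2⟩ := Ordinal.lt_lift_iff.1 h1
    refine ⟨γ, hγ, rank_eq_of_rank_eq hwf ?_⟩
    rw [rank_const hwf h0 hcomplete γ hγ, hγ2]
  -- A₁ : a.e., f a is a cardinal
  have hA1 : {a | (f a).card.ord = f a} ∈ U := by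
    by_contra hA
    have hB : {a | (f a).card.ord = f a}ᶜ ∈ U := Ultrafilter.compl_mem_iff_notMem.2 hA
    have hpred : pred U (fun a => (f a).card.ord) f := by
      refine U.mem_of_superset hB (fun a ha => ?_)
      simp only [Set.mem_compl_iff, Set.mem_setOf_eq] at ha ⊢
      exact lt_of_le_of_ne (Cardinal.ord_card_le _) ha
    obtain ⟨γ, hγ, hγ2⟩ := hconst _ hpred
    have hc : γ.card < κ := Cardinal.lt_ord.1 hγ
    have hδ : (Order.succ γ.card).ord < κ.ord :=
      Cardinal.ord_lt_ord.2 ((Order.succ_le_of_lt (Cardinal.cantor _)).trans_lt (hsl.2 hc))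
    refine hbound _ hδ ?_
    refine U.mem_of_superset hγ2 (fun a ha => ?_)
    simp only [Set.mem_setOf_eq] at ha ⊢
    have hcard : (f a).card = γ.card := by rw [← Cardinal.card_ord (f a).card, ha]
    refine le_of_lt (Cardinal.lt_ord.2 ?_)
    rw [hcard]
    exact Order.lt_succ _
  -- A₂ : a.e., f a is a regular ordinal
  have hA2 : {a | (f a).cof.ord = f a} ∈ U := by
    by_contra hA
    have hB : {a | (f a).cof.ord = f a}ᶜ ∈ U := Ultrafilter.compl_mem_iff_notMem.2 hA
    have hpred : pred U (fun a => (f a).cof.ord) f := by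
      refine U.mem_of_superset hB (fun a ha => ?_)
      simp only [Set.mem_compl_iff, Set.mem_setOf_eq] at ha ⊢
      exact lt_of_le_of_ne (Ordinal.ord_cof_le _) ha
    obtain ⟨γ, hγ, hγ2⟩ := hconst _ hpred
    have hex : ∀ a, (f a).cof.ord = γ →
        ∃ s : γ.ToType → Ordinal.{u}, (∀ i, s i < f a) ∧ ∀ x < f a, ∃ i, x ≤ s i := by
      intro a ha
      obtain ⟨ι, t, hlsub, hcardι⟩ := Ordinal.exists_lsub_cof (f a)
      have hmk : #γ.ToType = #ι := by
        rw [hcardι, Cardinal.mk_toType, ← Cardinal.card_ord (f a).cof, ha]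
      obtain ⟨e⟩ := Cardinal.eq.1 hmk
      refine ⟨t ∘ e, fun i => ?_, fun x hx => ?_⟩
      · rw [← hlsub]; exact Ordinal.lt_lsub t (e i)
      · rw [← hlsub] at hx
        obtain ⟨j, hj⟩ := Ordinal.lt_lsub_iff.1 hx
        exact ⟨e.symm j, by simpa using hj⟩
    choose s hs1 hs2 using hex
    set g : γ.ToType → α → Ordinal.{u} :=
      fun i a => if h : (f a).cof.ord = γ then s a h i else 0 with hg
    have hgpred : ∀ i, pred U (g i) f := by
      intro i
      refine U.mem_of_superset hγ2 (fun a ha => ?_)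
      simp only [Set.mem_setOf_eq] at ha ⊢
      rw [hg]
      simp only [dif_pos ha]
      exact hs1 a ha i
    have hgconst : ∀ i, ∃ β < κ.ord, {a | g i a = β} ∈ U := fun i => hconst _ (hgpred i)
    choose β hβ1 hβ2 using hgconst
    have hβsup : (⨆ i, β i + 1) < κ.ord := by
      refine Ordinal.iSup_lt_ord ?_ (fun i => hκord.succ_lt (hβ1 i))
      rw [Cardinal.mk_toType]
      exact lt_of_lt_of_le (Cardinal.lt_ord.1 hγ) hreg.2
    have hW : ({a | (f a).cof.ord = γ} ∩ ⋂ i, {a | g i a = β i}) ∈ U := by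
      refine Filter.inter_mem hγ2 (iInter_mem hcomplete _ ?_ hβ2)
      rw [Cardinal.mk_toType]
      exact Cardinal.lt_ord.1 hγ
    refine hbound _ hβsup (U.mem_of_superset hW (fun a ha => ?_))
    obtain ⟨ha1, ha2⟩ := ha
    simp only [Set.mem_iInter, Set.mem_setOf_eq] at ha1 ha2 ⊢
    refine le_of_forall_lt (fun x hx => ?_)
    obtain ⟨i, hi⟩ := hs2 a ha1 x hx
    have h3 : s a ha1 i = β i := by
      have h4 := ha2 i
      rw [hg] at h4
      simpa only [dif_pos ha1] using h4
    calc x ≤ s a ha1 i := hi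
    _ = β i := h3
    _ < β i + 1 := Order.lt_succ _
    _ ≤ ⨆ i, β i + 1 := Ordinal.le_iSup _ i
  -- A₃ : a.e., f a is a strong limit
  have hA3 : {a | ∀ c' < (f a).card, (2 : Cardinal) ^ c' < (f a).card} ∈ U := by
    by_contra hA
    have hB : {a | ∀ c' < (f a).card, (2 : Cardinal) ^ c' < (f a).card}ᶜ ∈ U :=
      Ultrafilter.compl_mem_iff_notMem.2 hA
    have hex : ∀ a, ¬ (∀ c' < (f a).card, (2 : Cardinal) ^ c' < (f a).card) →
        ∃ c' : Cardinal, c' < (f a).card ∧ (f a).card ≤ 2 ^ c' := by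
      intro a ha
      push_neg at ha
      obtain ⟨c', hc1, hc2⟩ := ha
      exact ⟨c', hc1, hc2⟩
    choose w hw1 hw2 using hex
    set g : α → Ordinal.{u} := fun a =>
      if h : ¬ (∀ c' < (f a).card, (2 : Cardinal) ^ c' < (f a).card)
      then (w a h).ord else 0 with hg
    have hBeq : {a | ∀ c' < (f a).card, (2 : Cardinal) ^ c' < (f a).card}ᶜ =
        {a | ¬ (∀ c' < (f a).card, (2 : Cardinal) ^ c' < (f a).card)} := rfl
    have hpred : pred U g f := by
      refine U.mem_of_superset hB (fun a ha => ?_)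
      simp only [Set.mem_compl_iff, Set.mem_setOf_eq] at ha ⊢
      rw [hg]
      simp only [dif_pos ha]
      exact lt_of_lt_of_le (Cardinal.ord_lt_ord.2 (hw1 a ha)) (Cardinal.ord_card_le _)
    obtain ⟨γ, hγ, hγ2⟩ := hconst _ hpred
    have hc2κ : (2 : Cardinal) ^ γ.card < κ := hsl.2 (Cardinal.lt_ord.1 hγ)
    have hδ : (Order.succ ((2 : Cardinal) ^ γ.card)).ord < κ.ord :=
      Cardinal.ord_lt_ord.2 ((Order.succ_le_of_lt (Cardinal.cantor _)).trans_lt (hsl.2 hc2κ))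
    refine hbound _ hδ ?_
    refine U.mem_of_superset (Filter.inter_mem hγ2 hB) (fun a ha => ?_)
    obtain ⟨ha1, ha2⟩ := ha
    simp only [Set.mem_compl_iff, Set.mem_setOf_eq] at ha1 ha2 ⊢
    rw [hg] at ha1
    simp only [dif_pos ha2] at ha1
    have hwa : w a ha2 = γ.card := by rw [← Cardinal.card_ord (w a ha2), ha1]
    have hcard : (f a).card ≤ (2 : Cardinal) ^ γ.card := by
      rw [← hwa]; exact hw2 a ha2
    exact le_of_lt (Cardinal.lt_ord.2 (lt_of_le_of_lt hcard (Order.lt_succ _)))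
  -- conclusion
  intro lam hlam
  have hW : ({a | (f a).card.ord = f a} ∩ ({a | (f a).cof.ord = f a} ∩
      ({a | ∀ c' < (f a).card, (2 : Cardinal) ^ c' < (f a).card} ∩
      ({a | (ℵ₀ : Cardinal).ord < f a} ∩ {a | lam.ord < f a})))) ∈ U :=
    Filter.inter_mem hA1 (Filter.inter_mem hA2 (Filter.inter_mem hA3
      (Filter.inter_mem (hgt _ (Cardinal.ord_lt_ord.2 h0)) (hgt _ (Cardinal.ord_lt_ord.2 hlam)))))
  obtain ⟨a, ha1, ha2, ha3, ha4, ha5⟩ := Ultrafilter.nonempty_of_mem hW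
  simp only [Set.mem_setOf_eq] at ha1 ha2 ha3 ha4 ha5
  set μ := (f a).card with hμ
  have hord : μ.ord = f a := ha1
  have hμκ : μ < κ := Cardinal.lt_ord.1 (hf1 a)
  have h1 : ℵ₀ < μ := Cardinal.ord_lt_ord.1 (by rw [hord]; exact ha4)
  have hlamμ : lam < μ := Cardinal.ord_lt_ord.1 (by rw [hord]; exact ha5)
  refine ⟨μ, hlamμ, hμκ, h1, ?_, ?_⟩
  · rw [hord]
    rw [show (f a).cof = μ by rw [← Cardinal.card_ord (f a).cof, ha2]]
  · exact ha3

theorem main' {α : Type u} (κ : Cardinal.{u})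
    (hκ : Cardinal.mk α = κ) (huncountable : Cardinal.aleph0 < κ) (U : Ultrafilter α)
    (hnonprincipal : ¬ ∃ Y : Set α, ∀ X : Set α, X ∈ U ↔ Y ⊆ X)
    (hcomplete : ∀ s : Set (Set α), Cardinal.mk s < κ → (∀ X ∈ s, X ∈ U) → ⋂₀ s ∈ U) :
    κ.IsInaccessible ∧
      Cardinal.mk {μ : Cardinal.{u} // μ < κ ∧ μ.IsInaccessible} = Cardinal.lift.{u + 1} κ := by
  classical
  have h0 := huncountable
  have hreg : κ.IsRegular := MKI.isRegular hκ h0 hnonprincipal hcomplete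
  have hsl : κ.IsStrongLimit := MKI.isStrongLimit hκ h0 hnonprincipal hcomplete
  have hrefl := MKI.reflection hκ h0 hreg hsl hnonprincipal hcomplete
  refine ⟨⟨h0, hreg.2, hsl.2⟩, le_antisymm ?_ ?_⟩
  · -- upper bound
    have hinj : Function.Injective (fun μ : {μ : Cardinal.{u} // μ < κ ∧ μ.IsInaccessible} =>
        (ULift.up.{u + 1} ((Ordinal.ToType.mk (o := κ.ord))
          ⟨μ.1.ord, Cardinal.ord_lt_ord.2 μ.2.1⟩))) := by
      intro μ ν h
      have h2 := ((Ordinal.ToType.mk (o := κ.ord))).injective (congrArg ULift.down h)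
      exact Subtype.ext (Cardinal.ord_injective (Subtype.ext_iff.1 h2))
    calc #{μ : Cardinal.{u} // μ < κ ∧ μ.IsInaccessible}
        ≤ #(ULift.{u + 1} κ.ord.ToType) := Cardinal.mk_le_of_injective hinj
      _ = Cardinal.lift.{u + 1} κ := by
          rw [Cardinal.mk_uLift, Cardinal.mk_toType, Cardinal.card_ord]
  · -- lower bound
    by_contra hcon
    push_neg at hcon
    set S := {μ : Cardinal.{u} // μ < κ ∧ μ.IsInaccessible}
    set o : Ordinal.{u + 1} := Ordinal.lift.{u + 1} κ.ord with ho
    have hcof : o.cof = Cardinal.lift.{u + 1} κ.ord.cof := (Ordinal.lift_cof κ.ord).symm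
    have hlim : Order.IsSuccLimit o := by
      rw [ho, Cardinal.lift_ord]
      exact Cardinal.isSuccLimit_ord (by simpa using Cardinal.lift_le.{u + 1}.2 h0.le)
    set F : S → Ordinal.{u + 1} := fun μ => Ordinal.lift.{u + 1} μ.1.ord + 1 with hF
    have hFlt : ∀ μ : S, F μ < o :=
      fun μ => hlim.succ_lt (Ordinal.lift_lt.2 (Cardinal.ord_lt_ord.2 μ.2.1))
    have hι : #S < o.cof := by
      rw [hcof]
      exact lt_of_lt_of_le hcon (Cardinal.lift_le.2 hreg.2)
    have hsup : (⨆ μ, F μ) < o := Ordinal.iSup_lt_ord hι hFlt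
    have hle : o ≤ ⨆ μ, F μ := by
      refine le_of_forall_lt (fun x hx => ?_)
      obtain ⟨y, hy, rfl⟩ := Ordinal.lt_lift_iff.1 hx
      obtain ⟨μ, hμ1, hμ2, hμ3⟩ := hrefl y.card (Cardinal.lt_ord.1 hy)
      have hyμ : y < μ.ord := Cardinal.lt_ord.2 hμ1
      calc Ordinal.lift.{u + 1} y < Ordinal.lift.{u + 1} μ.ord + 1 :=
            lt_trans (Ordinal.lift_lt.2 hyμ) (Order.lt_succ _)
        _ = F ⟨μ, hμ2, hμ3⟩ := rfl
        _ ≤ ⨆ μ, F μ := Ordinal.le_iSup F _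
    exact absurd (lt_of_le_of_lt hle hsup) (lt_irrefl o)

end MKI

/-- If `κ` is an uncountable measurable cardinal (the cardinality of a set `α` carrying a
nonprincipal `κ`-complete ultrafilter), then `κ` is the `κ`-th strongly inaccessible cardinal;
in particular `κ` is strongly inaccessible and the set of strongly inaccessible cardinals
below `κ` has cardinality `κ`. -/
theorem measurable_is_kth_inaccessible {α : Type u} (κ : Cardinal.{u})
    (hκ : Cardinal.mk α = κ) (huncountable : Cardinal.aleph0 < κ) (U : Ultrafilter α)
    (hnonprincipal : ¬ ∃ Y : Set α, ∀ X : Set α, X ∈ U ↔ Y ⊆ X)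
    (hcomplete : ∀ s : Set (Set α), Cardinal.mk s < κ → (∀ X ∈ s, X ∈ U) → ⋂₀ s ∈ U) :
    κ.IsInaccessible ∧
      Cardinal.mk {μ : Cardinal.{u} // μ < κ ∧ μ.IsInaccessible} = Cardinal.lift.{u + 1} κ :=
  MKI.main' κ hκ huncountable U hnonprincipal hcomplete
end

section
/- (ZFC) There exists a set of reals which is not determined: there is a set A ⊆ ω^ω such that in the infinite game G_ω(A), neither player I nor player II has a winning strategy. -/
/-- A play `x : ℕ → ℕ` is consistent with the strategy `σ` for player I
(who moves at the even positions) if each even entry of `x` is the value of `σ`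
at the finite sequence of previous entries. -/
def ConsistentI (σ : List ℕ → ℕ) (x : ℕ → ℕ) : Prop :=
  ∀ n : ℕ, x (2 * n) = σ (List.ofFn fun i : Fin (2 * n) => x i)

/-- A play `x : ℕ → ℕ` is consistent with the strategy `τ` for player II
(who moves at the odd positions) if each odd entry of `x` is the value of `τ`
at the finite sequence of previous entries. -/
def ConsistentII (τ : List ℕ → ℕ) (x : ℕ → ℕ) : Prop :=
  ∀ n : ℕ, x (2 * n + 1) = τ (List.ofFn fun i : Fin (2 * n + 1) => x i)

/-- `σ` is a winning strategy for player I in the game `G_ω(A)`: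
every play consistent with `σ` lands in `A`. -/
def WinningI (A : Set (ℕ → ℕ)) (σ : List ℕ → ℕ) : Prop :=
  ∀ x : ℕ → ℕ, ConsistentI σ x → x ∈ A

/-- `τ` is a winning strategy for player II in the game `G_ω(A)`:
every play consistent with `τ` lands outside `A`. -/
def WinningII (A : Set (ℕ → ℕ)) (τ : List ℕ → ℕ) : Prop :=
  ∀ x : ℕ → ℕ, ConsistentII τ x → x ∉ A


open Cardinal Set

/-! ### Plays following a fixed strategy -/

def playI (σ : List ℕ → ℕ) (y : ℕ → ℕ) : ℕ → ℕ
  | n =>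
    if n % 2 = 0 then σ (List.ofFn fun i : Fin n => playI σ y i.val)
    else y (n / 2)
termination_by n => n
decreasing_by exact i.isLt

def playII (τ : List ℕ → ℕ) (y : ℕ → ℕ) : ℕ → ℕ
  | n =>
    if n % 2 = 1 then τ (List.ofFn fun i : Fin n => playII τ y i.val)
    else y (n / 2)
termination_by n => n
decreasing_by exact i.isLt

lemma consistentI_playI (σ : List ℕ → ℕ) (y : ℕ → ℕ) : ConsistentI σ (playI σ y) := by
  intro n; rw [playI, if_pos (show (2 * n) % 2 = 0 by omega)]

lemma playI_odd (σ : List ℕ → ℕ) (y : ℕ → ℕ) (n : ℕ) : playI σ y (2 * n + 1) = y n := by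
  rw [playI]
  have h1 : (2 * n + 1) % 2 = 1 := by omega
  have h2 : (2 * n + 1) / 2 = n := by omega
  simp [h1, h2]

lemma consistentII_playII (τ : List ℕ → ℕ) (y : ℕ → ℕ) : ConsistentII τ (playII τ y) := by
  intro n; rw [playII, if_pos (show (2 * n + 1) % 2 = 1 by omega)]

lemma playII_even (τ : List ℕ → ℕ) (y : ℕ → ℕ) (n : ℕ) : playII τ y (2 * n) = y n := by
  rw [playII]
  have h1 : ¬ (2 * n) % 2 = 1 := by omega
  have h2 : (2 * n) / 2 = n := by omega
  simp [h1, h2]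

lemma mk_consistentI (σ : List ℕ → ℕ) : #(ℕ → ℕ) ≤ #({x | ConsistentI σ x} : Set (ℕ → ℕ)) := by
  apply Cardinal.mk_le_of_injective
    (f := fun y => (⟨playI σ y, consistentI_playI σ y⟩ : ({x | ConsistentI σ x} : Set (ℕ → ℕ))))
  intro y1 y2 h
  funext n
  have h' : playI σ y1 = playI σ y2 := congrArg Subtype.val h
  have := congrFun h' (2 * n + 1)
  rwa [playI_odd, playI_odd] at this

lemma mk_consistentII (τ : List ℕ → ℕ) : #(ℕ → ℕ) ≤ #({x | ConsistentII τ x} : Set (ℕ → ℕ)) := by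
  apply Cardinal.mk_le_of_injective
    (f := fun y => (⟨playII τ y, consistentII_playII τ y⟩ : ({x | ConsistentII τ x} : Set (ℕ → ℕ))))
  intro y1 y2 h
  funext n
  have h' : playII τ y1 = playII τ y2 := congrArg Subtype.val h
  have := congrFun h' (2 * n)
  rwa [playII_even, playII_even] at this

/-! ### Abstract Bernstein-style construction -/

lemma bernstein_exists_pair {β : Type} (hβ : ℵ₀ ≤ #β) {C D : (#β).ord.ToType → Set β}
    (hC : ∀ t, #β ≤ #(C t)) (hD : ∀ t, #β ≤ #(D t)) (t : (#β).ord.ToType)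
    (prev : ∀ s, s < t → β × β) :
    ∃ p : β × β, p.1 ∈ C t ∧ p.2 ∈ D t ∧ p.1 ≠ p.2 ∧
      ∀ s (h : s < t), (prev s h).1 ≠ p.1 ∧ (prev s h).1 ≠ p.2 ∧
        (prev s h).2 ≠ p.1 ∧ (prev s h).2 ≠ p.2 := by
  set U : Set β := range (fun s : Iio t => (prev s s.2).1) ∪
    range (fun s : Iio t => (prev s s.2).2) with hU
  have hIio : #(Iio t) < #β := Cardinal.mk_Iio_ord_toType t
  have hUcard : #U < #β := by
    refine lt_of_le_of_lt (Cardinal.mk_union_le _ _) ?_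
    exact Cardinal.add_lt_of_lt hβ (lt_of_le_of_lt Cardinal.mk_range_le hIio)
      (lt_of_le_of_lt Cardinal.mk_range_le hIio)
  have hx : (C t \ U).Nonempty := by
    rw [Set.diff_nonempty]
    intro hsub
    exact absurd (le_trans (hC t) (Cardinal.mk_le_mk_of_subset hsub)) (not_le.2 hUcard)
  obtain ⟨x, hxC, hxU⟩ := hx
  have hy : (D t \ insert x U).Nonempty := by
    rw [Set.diff_nonempty]
    intro hsub
    have : #(insert x U : Set β) < #β :=
      lt_of_le_of_lt Cardinal.mk_insert_le
        (Cardinal.add_lt_of_lt hβ hUcard (lt_of_lt_of_le Cardinal.one_lt_aleph0 hβ))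
    exact absurd (le_trans (hD t) (Cardinal.mk_le_mk_of_subset hsub)) (not_le.2 this)
  obtain ⟨y, hyD, hyU⟩ := hy
  have hyx : y ≠ x := fun h => hyU (h ▸ Set.mem_insert x U)
  have hyU' : y ∉ U := fun h => hyU (Set.mem_insert_of_mem x h)
  refine ⟨(x, y), hxC, hyD, fun h => hyx h.symm, fun s h => ?_⟩
  have h1 : (prev s h).1 ∈ U := Or.inl ⟨⟨s, h⟩, rfl⟩
  have h2 : (prev s h).2 ∈ U := Or.inr ⟨⟨s, h⟩, rfl⟩
  exact ⟨fun e => hxU ((show (prev s h).1 = x from e) ▸ h1),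
    fun e => hyU' ((show (prev s h).1 = y from e) ▸ h1),
    fun e => hxU ((show (prev s h).2 = x from e) ▸ h2),
    fun e => hyU' ((show (prev s h).2 = y from e) ▸ h2)⟩

noncomputable def bernsteinF {β : Type} (hβ : ℵ₀ ≤ #β) {C D : (#β).ord.ToType → Set β}
    (hC : ∀ t, #β ≤ #(C t)) (hD : ∀ t, #β ≤ #(D t)) : (#β).ord.ToType → β × β :=
  (IsWellFounded.wf (α := (#β).ord.ToType) (r := (· < ·))).fix
    (fun t prev => (bernstein_exists_pair hβ hC hD t prev).choose)

lemma bernsteinF_spec {β : Type} (hβ : ℵ₀ ≤ #β) {C D : (#β).ord.ToType → Set β}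
    (hC : ∀ t, #β ≤ #(C t)) (hD : ∀ t, #β ≤ #(D t)) (t : (#β).ord.ToType) :
    (bernsteinF hβ hC hD t).1 ∈ C t ∧ (bernsteinF hβ hC hD t).2 ∈ D t ∧
      (bernsteinF hβ hC hD t).1 ≠ (bernsteinF hβ hC hD t).2 ∧
      ∀ s (_ : s < t), (bernsteinF hβ hC hD s).1 ≠ (bernsteinF hβ hC hD t).1 ∧
        (bernsteinF hβ hC hD s).1 ≠ (bernsteinF hβ hC hD t).2 ∧
        (bernsteinF hβ hC hD s).2 ≠ (bernsteinF hβ hC hD t).1 ∧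
        (bernsteinF hβ hC hD s).2 ≠ (bernsteinF hβ hC hD t).2 := by
  have heq : bernsteinF hβ hC hD t =
      (bernstein_exists_pair hβ hC hD t (fun s _ => bernsteinF hβ hC hD s)).choose :=
    WellFounded.fix_eq _ _ t
  rw [heq]
  exact (bernstein_exists_pair hβ hC hD t (fun s _ => bernsteinF hβ hC hD s)).choose_spec

lemma bernstein_sets {ι β : Type} (hβ : ℵ₀ ≤ #β) (hι : #ι ≤ #β) (C D : ι → Set β)
    (hC : ∀ i, #β ≤ #(C i)) (hD : ∀ i, #β ≤ #(D i)) :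
    ∃ a b : ι → β, (∀ i, a i ∈ C i) ∧ (∀ i, b i ∈ D i) ∧ ∀ i j, a i ≠ b j := by
  have hmk : #ι ≤ #((#β).ord.ToType) := by rwa [Cardinal.mk_ord_toType]
  obtain ⟨g⟩ := Cardinal.le_def _ _ |>.1 hmk
  classical
  set C' : (#β).ord.ToType → Set β :=
    fun t => if h : ∃ i, g i = t then C h.choose else Set.univ with hC'def
  set D' : (#β).ord.ToType → Set β :=
    fun t => if h : ∃ i, g i = t then D h.choose else Set.univ with hD'def
  have hC' : ∀ t, #β ≤ #(C' t) := by
    intro t; rw [hC'def]; dsimp only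
    split
    · exact hC _
    · rw [Cardinal.mk_univ]
  have hD' : ∀ t, #β ≤ #(D' t) := by
    intro t; rw [hD'def]; dsimp only
    split
    · exact hD _
    · rw [Cardinal.mk_univ]
  have hCg : ∀ i, C' (g i) = C i := by
    intro i
    have h : ∃ i', g i' = g i := ⟨i, rfl⟩
    rw [hC'def]; dsimp only; rw [dif_pos h, g.injective h.choose_spec]
  have hDg : ∀ i, D' (g i) = D i := by
    intro i
    have h : ∃ i', g i' = g i := ⟨i, rfl⟩
    rw [hD'def]; dsimp only; rw [dif_pos h, g.injective h.choose_spec]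
  refine ⟨fun i => (bernsteinF hβ hC' hD' (g i)).1, fun i => (bernsteinF hβ hC' hD' (g i)).2,
    fun i => hCg i ▸ (bernsteinF_spec hβ hC' hD' (g i)).1,
    fun i => hDg i ▸ (bernsteinF_spec hβ hC' hD' (g i)).2.1, fun i j h => ?_⟩
  dsimp only at h
  rcases lt_trichotomy (g i) (g j) with hlt | heq | hgt
  · exact ((bernsteinF_spec hβ hC' hD' (g j)).2.2.2 (g i) hlt).2.1 h
  · rw [heq] at h
    exact (bernsteinF_spec hβ hC' hD' (g j)).2.2.1 h
  · exact ((bernsteinF_spec hβ hC' hD' (g i)).2.2.2 (g j) hgt).2.2.1 h.symm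

/-- (ZFC) There exists a set of reals (a set `A ⊆ ω^ω`) that is not determined:
neither player I nor player II has a winning strategy in `G_ω(A)`. -/
theorem exists_undetermined_set :
    ∃ A : Set (ℕ → ℕ), (¬ ∃ σ : List ℕ → ℕ, WinningI A σ) ∧
      (¬ ∃ τ : List ℕ → ℕ, WinningII A τ) := by
  have hβ : ℵ₀ ≤ #(ℕ → ℕ) := by
    rw [← Cardinal.mk_nat]
    exact Cardinal.mk_le_of_injective (f := fun n _ => n)
      (fun a b h => congrFun h 0)
  have hι : #(List ℕ → ℕ) ≤ #(ℕ → ℕ) :=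
    (Cardinal.mk_congr (Equiv.arrowCongr (Denumerable.eqv (List ℕ)) (Equiv.refl ℕ))).le
  obtain ⟨a, b, ha, hb, hab⟩ := bernstein_sets hβ hι
    (fun τ => {x | ConsistentII τ x}) (fun σ => {x | ConsistentI σ x})
    mk_consistentII mk_consistentI
  refine ⟨Set.range a, ?_, ?_⟩
  · rintro ⟨σ, hσ⟩
    have : b σ ∈ Set.range a := hσ (b σ) (hb σ)
    obtain ⟨τ, hτ⟩ := this
    exact hab τ σ hτ
  · rintro ⟨τ, hτ⟩
    exact hτ (a τ) (ha τ) ⟨τ, rfl⟩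
end

section
/- (Gale–Stewart) If A ⊆ ω^ω is either open or closed in the product topology on ω^ω (with ω discrete), then the game G_ω(A) is determined. -/
namespace GS

/-- The length-`n` initial segment of a play. -/
def pre (x : ℕ → ℕ) (n : ℕ) : List ℕ := List.ofFn fun i : Fin n => x i

@[simp] lemma pre_length (x : ℕ → ℕ) (n : ℕ) : (pre x n).length = n := List.length_ofFn

@[simp] lemma pre_zero (x : ℕ → ℕ) : pre x 0 = [] := rfl

lemma pre_succ (x : ℕ → ℕ) (n : ℕ) : pre x (n + 1) = pre x n ++ [x n] := by
  rw [pre, List.ofFn_succ', List.concat_eq_append]; rfl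

lemma pre_getD (x : ℕ → ℕ) {i n : ℕ} (h : i < n) : (pre x n).getD i 0 = x i := by
  rw [List.getD_eq_getElem?_getD, List.getElem?_eq_getElem (by simpa using h)]
  simp [pre]

/-- `x` follows strategy `f` of the player moving at positions of parity `r`,
from position `k` onwards. -/
def ConsFrom (r k : ℕ) (f : List ℕ → ℕ) (x : ℕ → ℕ) : Prop :=
  ∀ m, m % 2 = r → k ≤ m → x m = f (pre x m)

/-- The player moving at parity-`r` positions has a strategy forcing the play into `B`,
starting from position `p`. -/
def Win (B : Set (ℕ → ℕ)) (r : ℕ) (p : List ℕ) : Prop :=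
  ∃ f : List ℕ → ℕ, ∀ x : ℕ → ℕ, pre x p.length = p → ConsFrom r p.length f x → x ∈ B

/-- If every play through `p` is in `B`, the position is trivially won. -/
lemma win_of_cyl {B : Set (ℕ → ℕ)} {r : ℕ} {p : List ℕ}
    (h : ∀ x : ℕ → ℕ, pre x p.length = p → x ∈ B) : Win B r p :=
  ⟨fun _ => 0, fun x hx _ => h x hx⟩

/-- Pasting: if all children of `p` are winning, so is `p`. -/
lemma win_of_forall {B : Set (ℕ → ℕ)} {r : ℕ} {p : List ℕ}
    (h : ∀ a : ℕ, Win B r (p ++ [a])) : Win B r p := by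
  classical
  refine ⟨fun q => (h (q.getD p.length 0)).choose q, fun x hx hc => ?_⟩
  set a := x p.length with ha
  have hx' : pre x (p ++ [a]).length = p ++ [a] := by
    simp only [List.length_append, List.length_singleton]
    rw [pre_succ, hx]
  refine (h a).choose_spec x hx' ?_
  intro m hm hkm
  simp only [List.length_append, List.length_singleton] at hkm
  have h1 : p.length ≤ m := by omega
  have h2 : (pre x m).getD p.length 0 = a := ha ▸ pre_getD x (by omega)
  have h3 : x m = (h ((pre x m).getD p.length 0)).choose (pre x m) := hc m hm h1
  rwa [h2] at h3
 
/-- If it is the turn of the parity-`r` player at `p` and some child is winning,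
then `p` is winning. -/
lemma win_of_exists {B : Set (ℕ → ℕ)} {r : ℕ} {p : List ℕ} (hpar : p.length % 2 = r)
    {a : ℕ} (h : Win B r (p ++ [a])) : Win B r p := by
  classical
  obtain ⟨f, hf⟩ := h
  refine ⟨fun q => if q.length = p.length then a else f q, fun x hx hc => ?_⟩
  have hxa : x p.length = a := by
    have := hc p.length hpar le_rfl
    simpa using this
  have hx' : pre x (p ++ [a]).length = p ++ [a] := by
    simp only [List.length_append, List.length_singleton]
    rw [pre_succ, hx, hxa]
  refine hf x hx' ?_
  intro m hm hkm
  simp only [List.length_append, List.length_singleton] at hkm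
  have h3 : x m = if (pre x m).length = p.length then a else f (pre x m) := hc m hm (by omega)
  rwa [if_neg (by simp; omega)] at h3

/-- From a non-winning position for the opponent, there is a move keeping it non-winning. -/
lemma step {B : Set (ℕ → ℕ)} {s : ℕ} {q : List ℕ} (hq : ¬ Win B s q) :
    ∃ a : ℕ, ¬ Win B s (q ++ [a]) := by
  by_contra h
  push_neg at h
  exact hq (win_of_forall h)

/-- In any open set `U`, membership is witnessed by a finite initial segment. -/
lemma open_cyl {U : Set (ℕ → ℕ)} (hU : IsOpen U) {x : ℕ → ℕ} (hx : x ∈ U) :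
    ∃ n : ℕ, ∀ y : ℕ → ℕ, pre y n = pre x n → y ∈ U := by
  obtain ⟨I, u, h1, h2⟩ := isOpen_pi_iff.mp hU x hx
  refine ⟨I.sup id + 1, fun y hy => ?_⟩
  have hyx : ∀ i : Fin (I.sup id + 1), y i = x i := by
    intro i
    have := List.ofFn_inj.mp hy
    exact congrFun this i
  refine h2 ?_
  intro i hi
  have hlt : i < I.sup id + 1 := Nat.lt_succ_of_le (Finset.le_sup (f := id) hi)
  rw [show y i = x i from hyx ⟨i, hlt⟩]
  exact (h1 i hi).2

/-- The core Gale–Stewart argument: if the parity-`s` opponent (whose payoff `Bᶜ` is open)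
has no winning strategy, then the parity-`r` player wins. -/
lemma gale (B : Set (ℕ → ℕ)) (r s : ℕ) (hr : r < 2) (hs : s < 2) (hrs : r ≠ s)
    (hC : IsOpen Bᶜ) (h : ¬ Win Bᶜ s []) : Win B r [] := by
  classical
  refine ⟨fun q => if hq : ¬ Win Bᶜ s q then (step hq).choose else 0, fun x _ hc => ?_⟩
  have key : ∀ n : ℕ, ¬ Win Bᶜ s (pre x n) := by
    intro n
    induction n with
    | zero => simpa using h
    | succ n ih =>
        rw [pre_succ]
        rcases eq_or_ne (n % 2) r with hp | hp
        · have hxn : x n = (step ih).choose := by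
            have h3 : x n = if hq : ¬ Win Bᶜ s (pre x n) then (step hq).choose else 0 :=
              hc n hp (Nat.zero_le _)
            rwa [dif_pos ih] at h3
          rw [hxn]
          exact (step ih).choose_spec
        · have hps : (pre x n).length % 2 = s := by
            rw [pre_length]; omega
          intro hw
          exact ih (win_of_exists hps hw)
  by_contra hxB
  obtain ⟨n, hn⟩ := open_cyl hC hxB
  exact key n (win_of_cyl (p := pre x n) (fun y hy => hn y (by simpa using hy)))

end GS

/-- `A` is determined if one of the two players has a winning strategy in `G_ω(A)`. -/
def Determined (A : Set (ℕ → ℕ)) : Prop :=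
  (∃ σ : List ℕ → ℕ, WinningI A σ) ∨ (∃ τ : List ℕ → ℕ, WinningII A τ)

namespace GS

lemma winI_iff (A : Set (ℕ → ℕ)) : Win A 0 [] ↔ ∃ σ, WinningI A σ := by
  constructor
  · rintro ⟨f, hf⟩
    refine ⟨f, fun x hx => hf x rfl ?_⟩
    intro m hm _
    have h2 : 2 * (m / 2) = m := by omega
    have := hx (m / 2)
    rw [h2] at this
    exact this
  · rintro ⟨σ, hσ⟩
    refine ⟨σ, fun x _ hc => hσ x ?_⟩
    intro n
    exact hc (2 * n) (by omega) (Nat.zero_le _)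

lemma winII_iff (A : Set (ℕ → ℕ)) : Win Aᶜ 1 [] ↔ ∃ τ, WinningII A τ := by
  constructor
  · rintro ⟨f, hf⟩
    refine ⟨f, fun x hx => hf x rfl ?_⟩
    intro m hm _
    have h2 : 2 * (m / 2) + 1 = m := by omega
    have := hx (m / 2)
    rw [h2] at this
    exact this
  · rintro ⟨τ, hτ⟩
    refine ⟨τ, fun x _ hc => hτ x ?_⟩
    intro n
    exact hc (2 * n + 1) (by omega) (Nat.zero_le _)

end GS

/-- **Gale–Stewart**: every set `A ⊆ ω^ω` that is open or closed in the product topology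
on `ℕ → ℕ` (with `ℕ` discrete) is determined. -/
theorem open_or_closed_determined (A : Set (ℕ → ℕ)) (hA : IsOpen A ∨ IsClosed A) :
    Determined A := by
  rcases hA with hA | hA
  · by_cases h : GS.Win A 0 []
    · exact Or.inl ((GS.winI_iff A).mp h)
    · refine Or.inr ((GS.winII_iff A).mp ?_)
      refine GS.gale Aᶜ 1 0 (by norm_num) (by norm_num) (by norm_num) ?_ ?_
      · rwa [compl_compl]
      · intro hw
        exact h (by rwa [compl_compl] at hw)
  · by_cases h : GS.Win Aᶜ 1 []
    · exact Or.inr ((GS.winII_iff A).mp h)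
    · exact Or.inl ((GS.winI_iff A).mp
        (GS.gale A 0 1 (by norm_num) (by norm_num) (by norm_num) hA.isOpen_compl h))
end
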